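/- Let n ≥ a+b with a,b ≥ 1, and let A ⊆ C([n],a) and B ⊆ C([n],b) be cross-intersecting families. Then either |A| ≤ C(n−1, a−1) or |B| ≤ C(n−1, b−1). -/

import Mathlib

open Finset Nat
open scoped FinsetFamily

attribute [-instance] instDecidableEqFin

private lemma fin_succ_inj (n : ℕ) : Function.Injective (fun i : Fin n => (i : ℕ) + 1) := by
  intro i j h
  simp only [add_left_inj] at h
  exact Fin.val_injective h

/-- The core lemma on `Fin n`. -/
private lemma core (n a b : ℕ) (ha : 1 ≤ a) (hb : 1 ≤ b) (hn : a + b ≤ n)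
    (𝒜 ℬ : Finset (Finset (Fin n)))
    (h𝒜 : (𝒜 : Set (Finset (Fin n))).Sized a)
    (hℬ : (ℬ : Set (Finset (Fin n))).Sized b)
    (hcross : ∀ A ∈ 𝒜, ∀ B ∈ ℬ, (A ∩ B).Nonempty) :
    𝒜.card ≤ (n - 1).choose (a - 1) ∨ ℬ.card ≤ (n - 1).choose (b - 1) := by
  by_contra hcon
  push_neg at hcon
  obtain ⟨hA, hB⟩ := hcon
  have han : a ≤ n := le_trans (Nat.le_add_right a b) hn
  have hbn : b ≤ n - a := by omega
  have h1n : 1 ≤ n := le_trans ha han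
  -- complements
  have h𝒜bar : ((𝒜ᶜˢ : Finset (Finset (Fin n))) : Set (Finset (Fin n))).Sized (n - a) := by
    simpa using h𝒜.compls
  have z : (n - 1).choose (n - a) ≤ #(𝒜ᶜˢ) := by
    rw [card_compls]
    have : (n - 1).choose (n - a) = (n - 1).choose (a - 1) := by
      have : n - a = (n - 1) - (a - 1) := by omega
      rw [this, Nat.choose_symm (by omega)]
    omega
  have kk := Finset.kruskal_katona_lovasz_form (i := n - a - b) (r := n - a) (k := n - 1)
      (by omega) (by omega) (by omega) h𝒜bar z
  have hdiff : n - a - (n - a - b) = b := by omega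
  rw [hdiff] at kk
  -- disjointness
  have hdisj : Disjoint ℬ (∂^[n - a - b] 𝒜ᶜˢ) := by
    rw [disjoint_right]
    intro B hBshadow hBB
    rw [mem_shadow_iterate_iff_exists_sdiff] at hBshadow
    obtain ⟨C, hC, hBC, _⟩ := hBshadow
    rw [mem_compls] at hC
    obtain ⟨x, hx⟩ := hcross _ hC _ hBB
    rw [mem_inter] at hx
    exact (mem_compl.1 hx.1) (hBC hx.2)
  -- union is sized b in Fin n
  have hsized : ((ℬ ∪ ∂^[n - a - b] 𝒜ᶜˢ : Finset (Finset (Fin n))) :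
      Set (Finset (Fin n))).Sized b := by
    rw [coe_union, Set.sized_union]
    refine ⟨hℬ, ?_⟩
    have := h𝒜bar.shadow_iterate (k := n - a - b)
    rwa [hdiff] at this
  have hle : #(ℬ ∪ ∂^[n - a - b] 𝒜ᶜˢ) ≤ n.choose b := by
    have := hsized.card_le
    rwa [Fintype.card_fin] at this
  rw [card_union_of_disjoint hdisj] at hle
  have hpascal : n.choose b = (n - 1).choose (b - 1) + (n - 1).choose b := by
    have h1 : n = (n - 1) + 1 := by omega
    have h2 : b = (b - 1) + 1 := by omega
    conv_lhs => rw [h1, h2]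
    have h3 : (b - 1).succ = b := by omega
    rw [Nat.choose_succ_succ, h3]
  omega

theorem cross_intersecting_one_small (n a b : ℕ) (ha : 1 ≤ a) (hb : 1 ≤ b)
    (hn : a + b ≤ n)
    (𝒜 ℬ : Finset (Finset ℕ))
    (h𝒜 : 𝒜 ⊆ (Finset.Icc 1 n).powersetCard a)
    (hℬ : ℬ ⊆ (Finset.Icc 1 n).powersetCard b)
    (hcross : ∀ A ∈ 𝒜, ∀ B ∈ ℬ, (A ∩ B).Nonempty) :
    𝒜.card ≤ (n - 1).choose (a - 1) ∨ ℬ.card ≤ (n - 1).choose (b - 1) := by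
  classical
  set f : Fin n → ℕ := fun i => (i : ℕ) + 1 with hf
  have hfinj : Function.Injective f := fin_succ_inj n
  have hrange : ∀ x, x ∈ Set.range f ↔ x ∈ Finset.Icc 1 n := by
    intro x
    constructor
    · rintro ⟨i, rfl⟩
      simp [f, mem_Icc]
    · intro hx
      rw [mem_Icc] at hx
      exact ⟨⟨x - 1, by omega⟩, by simp [f]; omega⟩
  set Φ : Finset ℕ → Finset (Fin n) := fun A => A.preimage f hfinj.injOn with hΦ
  -- key: card of Φ A when A ⊆ Icc 1 n
  have hcard : ∀ A : Finset ℕ, A ⊆ Finset.Icc 1 n → (Φ A).card = A.card := by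
    intro A hA
    rw [hΦ]
    simp only
    rw [Finset.card_preimage]
    congr 1
    apply Finset.filter_true_of_mem
    intro x hx
    exact (hrange x).2 (hA hx)
  have himg : ∀ A : Finset ℕ, A ⊆ Finset.Icc 1 n → (Φ A).image f = A := by
    intro A hA
    rw [hΦ]
    simp only
    rw [Finset.image_preimage]
    apply Finset.filter_true_of_mem
    intro x hx
    exact (hrange x).2 (hA hx)
  set 𝒜' := 𝒜.image Φ with h𝒜'
  set ℬ' := ℬ.image Φ with hℬ'
  have hAmem : ∀ A ∈ 𝒜, A ⊆ Finset.Icc 1 n ∧ A.card = a := by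
    intro A hA
    have := h𝒜 hA
    rwa [mem_powersetCard] at this
  have hBmem : ∀ B ∈ ℬ, B ⊆ Finset.Icc 1 n ∧ B.card = b := by
    intro B hB
    have := hℬ hB
    rwa [mem_powersetCard] at this
  have hinjA : Set.InjOn Φ 𝒜 := by
    intro A₁ h₁ A₂ h₂ h
    have e₁ := himg A₁ (hAmem A₁ h₁).1
    have e₂ := himg A₂ (hAmem A₂ h₂).1
    rw [← e₁, ← e₂, h]
  have hinjB : Set.InjOn Φ ℬ := by
    intro A₁ h₁ A₂ h₂ h
    have e₁ := himg A₁ (hBmem A₁ h₁).1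
    have e₂ := himg A₂ (hBmem A₂ h₂).1
    rw [← e₁, ← e₂, h]
  have hcA : 𝒜'.card = 𝒜.card := Finset.card_image_of_injOn hinjA
  have hcB : ℬ'.card = ℬ.card := Finset.card_image_of_injOn hinjB
  have hsA : (𝒜' : Set (Finset (Fin n))).Sized a := by
    intro A hA
    rw [h𝒜', coe_image] at hA
    obtain ⟨A₀, h₀, rfl⟩ := hA
    rw [hcard A₀ (hAmem A₀ h₀).1]
    exact (hAmem A₀ h₀).2
  have hsB : (ℬ' : Set (Finset (Fin n))).Sized b := by
    intro B hB
    rw [hℬ', coe_image] at hB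
    obtain ⟨B₀, h₀, rfl⟩ := hB
    rw [hcard B₀ (hBmem B₀ h₀).1]
    exact (hBmem B₀ h₀).2
  have hcross' : ∀ A ∈ 𝒜', ∀ B ∈ ℬ', (A ∩ B).Nonempty := by
    intro A hA B hB
    rw [h𝒜', mem_image] at hA
    rw [hℬ', mem_image] at hB
    obtain ⟨A₀, hA₀, rfl⟩ := hA
    obtain ⟨B₀, hB₀, rfl⟩ := hB
    obtain ⟨x, hx⟩ := hcross A₀ hA₀ B₀ hB₀
    rw [mem_inter] at hx
    obtain ⟨i, rfl⟩ := (hrange x).2 ((hAmem A₀ hA₀).1 hx.1)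
    refine ⟨i, ?_⟩
    rw [mem_inter, hΦ]
    simp only
    rw [Finset.mem_preimage, Finset.mem_preimage]
    exact hx
  have := core n a b ha hb hn 𝒜' ℬ' hsA hsB hcross'
  rw [hcA, hcB] at this
  exact this
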